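/- 𝔰𝔱 ≤ 𝔰𝔱_{𝔰𝔱} ≤ 𝔰𝔱'. -/

import Mathlib

open Cardinal Set

/-- `X` is a `𝔰𝔱_l`-family on (the canonical type of order type) `l`:
a collection of countably infinite subsets of `l` such that every subset of
cardinality `ℵ₁` contains a member of `X`. -/
def IsStickFam (l : Cardinal) (X : Set (Set l.ord.ToType)) : Prop :=
  (∀ x ∈ X, #x = ℵ₀) ∧
    ∀ y : Set l.ord.ToType, #y = aleph 1 → ∃ x ∈ X, x ⊆ y

/-- The cardinal `𝔰𝔱_l`. -/
noncomputable def stickL (l : Cardinal) : Cardinal :=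
  sInf {c | ∃ X : Set (Set l.ord.ToType), IsStickFam l X ∧ #X = c}

/-- The cardinal `𝔰𝔱` (`= 𝔰𝔱_{ℵ₁}`). -/
noncomputable def stick : Cardinal := stickL (aleph 1)

/-- The cardinal `𝔰𝔱'`: the least `κ ≥ ℵ₁` carrying a stick family of size `κ`. -/
noncomputable def stick' : Cardinal :=
  sInf {k | aleph 1 ≤ k ∧ ∃ X : Set (Set k.ord.ToType), IsStickFam k X ∧ #X = k}

/-- The family of all countably infinite subsets is a stick family. -/
lemma isStickFam_full (l : Cardinal) :
    IsStickFam l {x : Set l.ord.ToType | #x = ℵ₀} := by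
  refine ⟨fun x hx => hx, fun y hy => ?_⟩
  have h : ℵ₀ ≤ #y := by rw [hy]; exact aleph0_le_aleph 1
  obtain ⟨p, hp, hpc⟩ := Cardinal.le_mk_iff_exists_subset.mp h
  exact ⟨p, hpc, hp⟩

lemma stickSet_nonempty (l : Cardinal) :
    {c | ∃ X : Set (Set l.ord.ToType), IsStickFam l X ∧ #X = c}.Nonempty :=
  ⟨_, _, isStickFam_full l, rfl⟩

lemma stickL_le_of_fam {l : Cardinal} {X : Set (Set l.ord.ToType)}
    (h : IsStickFam l X) : stickL l ≤ #X :=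
  csInf_le' ⟨X, h, rfl⟩

lemma exists_fam_stickL (l : Cardinal) :
    ∃ X : Set (Set l.ord.ToType), IsStickFam l X ∧ #X = stickL l :=
  csInf_mem (stickSet_nonempty l)

/-- Monotonicity of `𝔰𝔱_λ` in `λ`. -/
lemma stickL_mono {μ lam : Cardinal} (h : μ ≤ lam) : stickL μ ≤ stickL lam := by
  obtain ⟨X, ⟨hX1, hX2⟩, hXc⟩ := exists_fam_stickL lam
  have hle : #μ.ord.ToType ≤ #lam.ord.ToType := by
    rwa [mk_ord_toType, mk_ord_toType]
  obtain ⟨f⟩ := (Cardinal.le_def _ _).mp hle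
  set X' : Set (Set μ.ord.ToType) :=
    (fun x => f ⁻¹' x) '' {x ∈ X | x ⊆ Set.range f} with hX'
  have hfam : IsStickFam μ X' := by
    constructor
    · rintro x ⟨z, ⟨hzX, hzr⟩, rfl⟩
      rw [Cardinal.mk_preimage_of_injective_of_subset_range f z f.injective hzr]
      exact hX1 z hzX
    · intro y hy
      have : #(f '' y) = aleph 1 := by
        rw [Cardinal.mk_image_eq f.injective, hy]
      obtain ⟨x, hxX, hxy⟩ := hX2 (f '' y) this
      refine ⟨f ⁻¹' x, ⟨x, ⟨hxX, hxy.trans (Set.image_subset_range f y)⟩, rfl⟩, ?_⟩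
      intro a ha
      obtain ⟨b, hb, hba⟩ := hxy ha
      rwa [← f.injective hba]
  calc stickL μ ≤ #X' := stickL_le_of_fam hfam
    _ ≤ #{x ∈ X | x ⊆ Set.range f} := mk_image_le
    _ ≤ #X := mk_le_mk_of_subset (Set.sep_subset _ _)
    _ = stickL lam := hXc

/-- `ℵ₁ ≤ 𝔰𝔱`. -/
lemma aleph_one_le_stick : aleph 1 ≤ stick := by
  by_contra hlt
  push_neg at hlt
  have hst : stick ≤ ℵ₀ := by
    rwa [← succ_aleph0, Order.lt_succ_iff] at hlt
  obtain ⟨X, ⟨hX1, hX2⟩, hXc⟩ := exists_fam_stickL (aleph 1)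
  have hstX : #X ≤ ℵ₀ := by
    rw [hXc]; exact hst
  have hUc : #(⋃₀ X : Set (aleph 1).ord.ToType) ≤ ℵ₀ := by
    refine (mk_sUnion_le X).trans ?_
    have h2 : (⨆ s : X, #(s : Set (aleph 1).ord.ToType)) ≤ ℵ₀ :=
      ciSup_le' fun s => (hX1 s.1 s.2).le
    calc #X * (⨆ s : X, #(s : Set (aleph 1).ord.ToType)) ≤ ℵ₀ * ℵ₀ :=
          mul_le_mul' hstX h2
      _ = ℵ₀ := by simp
  have hT : #(aleph 1).ord.ToType = aleph 1 := mk_ord_toType _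
  have hcompl : #((⋃₀ X)ᶜ : Set (aleph 1).ord.ToType) = aleph 1 := by
    have : Infinite (aleph 1).ord.ToType := by
      rw [Cardinal.infinite_iff, hT]; exact aleph0_le_aleph 1
    rw [mk_compl_of_infinite (⋃₀ X) (by rw [hT]; exact hUc.trans_lt aleph0_lt_aleph_one), hT]
  obtain ⟨x, hxX, hxy⟩ := hX2 (⋃₀ X)ᶜ hcompl
  have hxne : x.Nonempty := by
    rw [← Set.nonempty_coe_sort, ← Cardinal.mk_ne_zero_iff, hX1 x hxX]
    exact aleph0_ne_zero
  obtain ⟨a, ha⟩ := hxne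
  exact (hxy ha) (Set.mem_sUnion.mpr ⟨x, hxX, ha⟩)

/-- For `ℵ₀ ≤ κ` with `κ ^ ℵ₀ = κ`, there are exactly `κ` countably infinite subsets. -/
lemma mk_countable_subsets (κ : Cardinal) (hκ : ℵ₀ ≤ κ) (hpow : κ ^ ℵ₀ = κ) :
    #{x : Set κ.ord.ToType | #x = ℵ₀} = κ := by
  have hT : #κ.ord.ToType = κ := mk_ord_toType _
  have hinf : Infinite κ.ord.ToType := by
    rw [Cardinal.infinite_iff, hT]; exact hκ
  apply le_antisymm
  · have hch : ∀ x : {x : Set κ.ord.ToType | #x = ℵ₀},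
        ∃ g : ℕ → κ.ord.ToType, Set.range g = (x : Set _) := by
      rintro ⟨x, hx⟩
      have : Nonempty (ℕ ≃ x) :=
        Cardinal.lift_mk_eq'.mp (by simp [show #x = ℵ₀ from hx])
      obtain ⟨e⟩ := this
      refine ⟨fun n => (e n : _), ?_⟩
      ext a
      constructor
      · rintro ⟨n, rfl⟩; exact (e n).2
      · intro ha; exact ⟨e.symm ⟨a, ha⟩, by simp⟩
    choose g hg using hch
    have hginj : Function.Injective g := by
      intro a b hab
      apply Subtype.ext
      rw [← hg a, ← hg b, hab]
    refine le_trans (mk_le_of_injective hginj) ?_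
    rw [mk_arrow, hT, mk_denumerable, lift_aleph0, lift_id', hpow]
  · obtain ⟨s₀, hs₀⟩ : ∃ s₀ : Set κ.ord.ToType, #s₀ = ℵ₀ := by
      apply Cardinal.le_mk_iff_exists_set.mp
      rw [hT]; exact hκ
    have hlt : #s₀ < #κ.ord.ToType := by
      rw [hT, hs₀]
      rcases lt_or_eq_of_le hκ with h | h
      · exact h
      · exfalso
        rw [← h] at hpow
        have : ℵ₀ < ℵ₀ ^ ℵ₀ := by
          calc ℵ₀ < 2 ^ ℵ₀ := cantor _
            _ ≤ ℵ₀ ^ ℵ₀ := power_le_power_right (by exact_mod_cast (nat_lt_aleph0 2).le)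
        exact this.ne' hpow
    have hcompl : #(s₀ᶜ : Set κ.ord.ToType) = κ := by
      rw [mk_compl_of_infinite s₀ hlt, hT]
    have hmem : ∀ t : (s₀ᶜ : Set κ.ord.ToType),
        (insert t.1 s₀ : Set κ.ord.ToType) ∈ {x : Set κ.ord.ToType | #x = ℵ₀} := by
      rintro ⟨t, ht⟩
      show #(insert t s₀ : Set κ.ord.ToType) = ℵ₀
      rw [Cardinal.mk_insert ht, hs₀, Cardinal.add_one_eq le_rfl]
    refine le_trans hcompl.symm.le ?_
    refine mk_le_of_injective (f := fun t => ⟨insert t.1 s₀, hmem t⟩) ?_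
    intro a b hab
    have h1 : (insert a.1 s₀ : Set κ.ord.ToType) = insert b.1 s₀ :=
      congrArg Subtype.val hab
    have h2 : a.1 ∈ insert b.1 s₀ := h1 ▸ Set.mem_insert a.1 s₀
    rcases h2 with h | h
    · exact Subtype.ext h
    · exact absurd h a.2

/-- The defining set of `𝔰𝔱'` is nonempty: `𝔠` belongs to it. -/
lemma stick'_set_nonempty :
    {k | aleph 1 ≤ k ∧ ∃ X : Set (Set k.ord.ToType), IsStickFam k X ∧ #X = k}.Nonempty :=
  ⟨𝔠, aleph_one_le_continuum, {x | #x = ℵ₀}, isStickFam_full 𝔠,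
    mk_countable_subsets 𝔠 aleph0_le_continuum continuum_power_aleph0⟩

theorem stick_le_stickL_stick_le_stick' :
    stick ≤ stickL stick ∧ stickL stick ≤ stick' := by
  have h1 : stick ≤ stickL stick := stickL_mono aleph_one_le_stick
  obtain ⟨hk1, X, hX, hXc⟩ := csInf_mem stick'_set_nonempty
  have hstick_le : stick ≤ stick' := by
    calc stick = stickL (aleph 1) := rfl
      _ ≤ stickL stick' := stickL_mono hk1
      _ ≤ #X := stickL_le_of_fam hX
      _ = stick' := hXc
  exact ⟨h1, (stickL_mono hstick_le).trans ((stickL_le_of_fam hX).trans hXc.le)⟩
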